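/- Let X be a Grothendieck Banach space and let M be a closed subspace of X such that the quotient Banach space X/M is separable. Then M (with the induced norm) is a Grothendieck space. -/

import Mathlib

open Filter Topology MeasureTheory
open scoped ENNReal

noncomputable section

/-- A Banach space `X` has weak*-sequentially compact dual ball if every sequence in the
closed unit ball of `X*` has a weak*-convergent subsequence. -/
def WStarSeqCompactDualBall (X : Type*) [SeminormedAddCommGroup X] [NormedSpace ℝ X] : Prop :=
  ∀ f : ℕ → (X →L[ℝ] ℝ), (∀ n, ‖f n‖ ≤ 1) →
    ∃ φ : ℕ → ℕ, StrictMono φ ∧ ∃ g : X →L[ℝ] ℝ,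
      ∀ x : X, Tendsto (fun k => f (φ k) x) atTop (nhds (g x))

/-- A Banach space `X` is a Grothendieck space if every weak*-convergent sequence in `X*`
is weakly convergent. -/
def GrothendieckSpace (X : Type*) [SeminormedAddCommGroup X] [NormedSpace ℝ X] : Prop :=
  ∀ (f : ℕ → (X →L[ℝ] ℝ)) (g : X →L[ℝ] ℝ),
    (∀ x : X, Tendsto (fun n => f n x) atTop (nhds (g x))) →
    ∀ F : (X →L[ℝ] ℝ) →L[ℝ] ℝ, Tendsto (fun n => F (f n)) atTop (nhds (F g))

/-- An operator is weakly compact if the closure of the image of the closed unit ball is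
compact in the weak topology of the codomain. -/
def IsWeaklyCompactOp {X Y : Type*} [SeminormedAddCommGroup X] [NormedSpace ℝ X]
    [SeminormedAddCommGroup Y] [NormedSpace ℝ Y] (T : X →L[ℝ] Y) : Prop :=
  IsCompact (closure (toWeakSpace ℝ Y '' (T '' Metric.closedBall (0:X) 1)))

/-- `ℓ¹`, the space of absolutely summable real sequences. -/
abbrev ellOne : Type := ↥(lp (fun _ : ℕ => ℝ) 1)

/-- Two normed spaces are isomorphic if there is a continuous linear bijection between them
with continuous inverse. -/
def IsomorphicBanach (X Y : Type*) [SeminormedAddCommGroup X] [NormedSpace ℝ X]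
    [SeminormedAddCommGroup Y] [NormedSpace ℝ Y] : Prop :=
  Nonempty (X ≃L[ℝ] Y)

/-- a closed subspace of a Grothendieck space with separable quotient is
Grothendieck. -/
theorem grothendieck_subspace_of_separable_quotient
    (X : Type*) [NormedAddCommGroup X] [NormedSpace ℝ X] [CompleteSpace X]
    (M : Submodule ℝ X) (hM : IsClosed (M : Set X))
    (hX : GrothendieckSpace X)
    (hsep : TopologicalSpace.SeparableSpace (X ⧸ M)) :
    GrothendieckSpace ↥M := by
  haveI : CompleteSpace M := hM.completeSpace_coe
  intro f g hfg Φ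
  -- the restriction operator X* → M*
  let R : (X →L[ℝ] ℝ) →L[ℝ] (↥M →L[ℝ] ℝ) :=
    (ContinuousLinearMap.compSL ↥M X ℝ (RingHom.id ℝ) (RingHom.id ℝ)).flip M.subtypeL
  have hR : ∀ (T : X →L[ℝ] ℝ) (m : ↥M), R T m = T m := fun _ _ => rfl
  -- uniform bound on the f n
  obtain ⟨C0, hC0⟩ : ∃ C, ∀ n, ‖f n‖ ≤ C := by
    apply banach_steinhaus
    intro x
    obtain ⟨C, hC⟩ := ((hfg x).norm.bddAbove_range)
    exact ⟨C, fun n => hC ⟨n, rfl⟩⟩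
  set C := max C0 0 with hCdef
  have hC : ∀ n, ‖f n‖ ≤ C := fun n => (hC0 n).trans (le_max_left _ _)
  have hCpos : (0:ℝ) ≤ C := le_max_right _ _
  -- Hahn-Banach extensions
  choose F hFext hFnorm using fun n => exists_extension_norm_eq M (f n)
  have hFC : ∀ n, ‖F n‖ ≤ C := fun n => (hFnorm n).le.trans (hC n)
  -- dense sequence in the quotient
  obtain ⟨u, hu⟩ := TopologicalSpace.exists_dense_seq (X ⧸ M)
  choose xs hxs using fun j => Submodule.Quotient.mk_surjective M (u j)
  refine tendsto_of_subseq_tendsto fun ns hns => ?_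
  -- extract subsequence converging at every xs j
  set v : ℕ → (ℕ → ℝ) := fun k j => F (ns k) (xs j) with hv
  have hvmem : ∀ k, v k ∈ Set.pi Set.univ (fun j => Set.Icc (-(C * ‖xs j‖)) (C * ‖xs j‖)) := by
    intro k j _
    have h1 : ‖F (ns k) (xs j)‖ ≤ C * ‖xs j‖ :=
      (F (ns k)).le_of_opNorm_le (hFC _) (xs j)
    exact abs_le.mp (by simpa [Real.norm_eq_abs] using h1)
  obtain ⟨a, -, φ, hφ, hva⟩ :=
    (isCompact_univ_pi fun j => isCompact_Icc).tendsto_subseq hvmem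
  have hva' : ∀ j, Tendsto (fun k => F (ns (φ k)) (xs j)) atTop (𝓝 (a j)) := by
    intro j
    have := (tendsto_pi_nhds.mp hva) j
    simpa [v, Function.comp] using this
  have hnsφ : Tendsto (fun k => ns (φ k)) atTop atTop := hns.comp hφ.tendsto_atTop
  -- pointwise convergence everywhere
  have key : ∀ x : X, ∃ l, Tendsto (fun k => F (ns (φ k)) x) atTop (𝓝 l) := by
    intro x
    refine cauchySeq_tendsto_of_complete ?_
    rw [Metric.cauchySeq_iff]
    intro ε hε
    set δ := ε / 4 / (C + 1) with hδ
    have hδpos : 0 < δ := by positivity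
    obtain ⟨j, hj⟩ := Metric.denseRange_iff.mp hu (Submodule.Quotient.mk x) δ hδpos
    have hq : ‖(Submodule.Quotient.mk (x - xs j) : X ⧸ M)‖ < δ := by
      have : (Submodule.Quotient.mk (x - xs j) : X ⧸ M)
          = Submodule.Quotient.mk x - u j := by
        rw [← hxs j, ← Submodule.Quotient.mk_sub]
      rw [this]
      simpa [dist_eq_norm] using hj
    obtain ⟨m, hmk, hmnorm⟩ := Submodule.Quotient.norm_mk_lt
      (Submodule.Quotient.mk (x - xs j) : X ⧸ M) (sub_pos.mpr hq)
    have hmδ : ‖m‖ < δ := by linarith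
    have hd : x - xs j - m ∈ M := by
      rw [← Submodule.Quotient.mk_eq_zero]
      rw [Submodule.Quotient.mk_sub, hmk]
      simp
    set d : ↥M := ⟨x - xs j - m, hd⟩ with hddef
    -- convergent part
    have hs : Tendsto (fun k => F (ns (φ k)) (xs j) + f (ns (φ k)) d) atTop
        (𝓝 (a j + g d)) := (hva' j).add ((hfg d).comp hnsφ)
    obtain ⟨N, hN⟩ := Metric.cauchySeq_iff.mp hs.cauchySeq (ε/2) (by positivity)
    refine ⟨N, fun p hp q hq' => ?_⟩
    have decomp : ∀ k, F (ns (φ k)) x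
        = (F (ns (φ k)) (xs j) + f (ns (φ k)) d) + F (ns (φ k)) m := by
      intro k
      have h1 : F (ns (φ k)) d = f (ns (φ k)) d := hFext _ d
      have h2 : x = xs j + (x - xs j - m) + m := by abel
      rw [← h1]
      have : F (ns (φ k)) x = F (ns (φ k)) (xs j) + F (ns (φ k)) (x - xs j - m)
          + F (ns (φ k)) m := by
        conv_lhs => rw [h2]
        simp [map_add]
      simpa [hddef] using this
    have hrb : ∀ k, |F (ns (φ k)) m| ≤ C * δ := by
      intro k
      have h1 : ‖F (ns (φ k)) m‖ ≤ C * ‖m‖ := (F _).le_of_opNorm_le (hFC _) m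
      have h2 : C * ‖m‖ ≤ C * δ := mul_le_mul_of_nonneg_left hmδ.le hCpos
      simpa [Real.norm_eq_abs] using h1.trans h2
    have hCδ : C * δ ≤ ε / 4 := by
      have h1 : C * δ = (ε/4) * (C/(C+1)) := by rw [hδ]; ring_nf
      have hle : C / (C + 1) ≤ 1 := by
        rw [div_le_one (by linarith)]; linarith
      nlinarith [hε.le]
    have hsp := hN p hp q hq'
    rw [Real.dist_eq] at hsp ⊢
    rw [decomp p, decomp q]
    obtain ⟨hA1, hA2⟩ := abs_lt.mp hsp
    obtain ⟨hr1, hr2⟩ := abs_le.mp ((hrb p).trans hCδ)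
    obtain ⟨hr3, hr4⟩ := abs_le.mp ((hrb q).trans hCδ)
    rw [abs_lt]
    constructor <;> linarith
  choose h hh using key
  -- the weak* limit as a continuous linear map
  let H : X →L[ℝ] ℝ := continuousLinearMapOfTendsto (fun k => F (ns (φ k)))
    (f := h) (tendsto_pi_nhds.mpr hh)
  have hHapp : ∀ x, H x = h x := fun _ => rfl
  have hHtendsto : ∀ x : X, Tendsto (fun k => F (ns (φ k)) x) atTop (𝓝 (H x)) := by
    intro x; rw [hHapp]; exact hh x
  have hRH : R H = g := by
    ext m
    have h1 : Tendsto (fun k => F (ns (φ k)) (m : X)) atTop (𝓝 (H m)) := hHtendsto m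
    have h2 : Tendsto (fun k => F (ns (φ k)) (m : X)) atTop (𝓝 (g m)) := by
      have := (hfg m).comp hnsφ
      simpa [Function.comp_def, fun k => hFext (ns (φ k)) m] using this
    exact (tendsto_nhds_unique h1 h2)
  have hRF : ∀ n, R (F n) = f n := by
    intro n; ext m; exact hFext n m
  have main := hX (fun k => F (ns (φ k))) H hHtendsto (Φ.comp R)
  refine ⟨φ, ?_⟩
  simpa [ContinuousLinearMap.comp_apply, hRF, hRH] using main
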